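/- Let α, γ > 0, β ∈ ℝ, Q = β/√(αγ) with Q > 1, and A(z) = α z₁⁴ + 2β z₁² z₂² + γ z₂⁴. Then for all ξ, η ∈ ℝ²: Re A(ξ+iη) + (Q²-1)A(η) = 2(Q-3)(√α ξ₁η₁ - √γ ξ₂η₂)² + [√α(ξ₁² - Qη₁²) + √γ(ξ₂² - Qη₂²)]² + 2(Q-1)√(αγ)(ξ₁ξ₂ - ((Q+3)/(Q-1))η₁η₂)² + 2((Q-3)(Q+1)(Q²+3)/(Q-1))√(αγ) η₁²η₂². -/

import Mathlib

open Complex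

/-- identity (relation3) in the regime `Q > 1`. -/
theorem stmt5 (α β γ : ℝ) (hα : 0 < α) (hγ : 0 < γ)
    (Q : ℝ) (hQdef : Q = β / Real.sqrt (α * γ)) (hQ : 1 < Q)
    (ξ1 ξ2 η1 η2 : ℝ) :
    ((α : ℂ) * (ξ1 + η1 * I) ^ 4 + 2 * β * (ξ1 + η1 * I) ^ 2 * (ξ2 + η2 * I) ^ 2
        + γ * (ξ2 + η2 * I) ^ 4).re
      + (Q ^ 2 - 1) * (α * η1 ^ 4 + 2 * β * η1 ^ 2 * η2 ^ 2 + γ * η2 ^ 4)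
    = 2 * (Q - 3) * (Real.sqrt α * ξ1 * η1 - Real.sqrt γ * ξ2 * η2) ^ 2
      + (Real.sqrt α * (ξ1 ^ 2 - Q * η1 ^ 2) + Real.sqrt γ * (ξ2 ^ 2 - Q * η2 ^ 2)) ^ 2
      + 2 * (Q - 1) * Real.sqrt (α * γ)
          * (ξ1 * ξ2 - (Q + 3) / (Q - 1) * η1 * η2) ^ 2
      + 2 * ((Q - 3) * (Q + 1) * (Q ^ 2 + 3) / (Q - 1)) * Real.sqrt (α * γ)
          * η1 ^ 2 * η2 ^ 2 := by
  set a := Real.sqrt α with ha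
  set c := Real.sqrt γ with hc
  have ha2 : a ^ 2 = α := Real.sq_sqrt hα.le
  have hc2 : c ^ 2 = γ := Real.sq_sqrt hγ.le
  have hac : Real.sqrt (α * γ) = a * c := Real.sqrt_mul hα.le γ
  have hacpos : 0 < a * c := by
    rw [← hac]; exact Real.sqrt_pos.mpr (mul_pos hα hγ)
  have hβ : β = Q * (a * c) := by
    rw [hQdef, hac]; rw [div_mul_cancel₀ _ hacpos.ne']
  have hQ1 : Q - 1 ≠ 0 := by linarith
  rw [hβ, hac, ← ha2, ← hc2]
  simp only [Complex.add_re, Complex.mul_re, Complex.mul_im, Complex.ofReal_re,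
    Complex.ofReal_im, Complex.I_re, Complex.I_im, pow_succ, pow_zero, one_mul,
    Complex.add_im, Complex.one_re, Complex.one_im, Complex.re_ofNat, Complex.im_ofNat]
  field_simp
  ring
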